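/- In KSPM(p) with p ≥ 2, starting from a stable monotone configuration x ∈ SM(n) to which one grain has been added at column 1, every avalanche terminates after at most n topplings, and the resulting final configuration is stable and monotone on the sites i ≥ 1. -/

import Mathlib

namespace KSPM

/-- number of times site `j` toppled before time `t` -/
def F (s : ℕ → ℤ) (t : ℕ) (j : ℤ) : ℕ :=
  ((Finset.range t).filter (fun a => s a = j)).card

/-- number of grains received by site `i` before time `t` -/
def G (p : ℕ) (s : ℕ → ℤ) (t : ℕ) (i : ℤ) : ℕ :=
  ((Finset.range t).filter (fun a => i - (p:ℤ) + 1 ≤ s a ∧ s a ≤ i - 1)).card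

lemma F_zero (s : ℕ → ℤ) (j : ℤ) : F s 0 j = 0 := by simp [F]

lemma G_zero (p : ℕ) (s : ℕ → ℤ) (i : ℤ) : G p s 0 i = 0 := by simp [G]

lemma F_succ (s : ℕ → ℤ) (t : ℕ) (j : ℤ) :
    F s (t+1) j = F s t j + (if s t = j then 1 else 0) := by
  unfold F
  rw [Finset.range_add_one, Finset.filter_insert]
  split_ifs with h
  · rw [Finset.card_insert_of_notMem (by simp)]
  · simp

lemma G_succ (p : ℕ) (s : ℕ → ℤ) (t : ℕ) (i : ℤ) :
    G p s (t+1) i = G p s t i + (if i - (p:ℤ) + 1 ≤ s t ∧ s t ≤ i - 1 then 1 else 0) := by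
  unfold G
  rw [Finset.range_add_one, Finset.filter_insert]
  split_ifs with h
  · rw [Finset.card_insert_of_notMem (by simp)]
  · simp

lemma F_mono (s : ℕ → ℤ) {t t' : ℕ} (h : t ≤ t') (j : ℤ) : F s t j ≤ F s t' j :=
  Finset.card_le_card (Finset.filter_subset_filter _ (Finset.range_subset_range.2 h))

lemma F_exists {s : ℕ → ℤ} {t : ℕ} {j : ℤ} (h : F s t j ≠ 0) : ∃ a, a < t ∧ s a = j := by
  obtain ⟨a, ha⟩ := Finset.card_ne_zero.1 h
  rw [Finset.mem_filter, Finset.mem_range] at ha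
  exact ⟨a, ha.1, ha.2⟩

lemma two_le_F {s : ℕ → ℤ} {a b t : ℕ} (hab : a < b) (hbt : b < t) (h : s a = s b) :
    2 ≤ F s t (s b) := by
  have hsub : ({a, b} : Finset ℕ) ⊆ (Finset.range t).filter (fun u => s u = s b) := by
    intro u hu
    rcases Finset.mem_insert.1 hu with rfl | hu
    · rw [Finset.mem_filter, Finset.mem_range]; exact ⟨by omega, h⟩
    · rw [Finset.mem_singleton] at hu; subst hu
      rw [Finset.mem_filter, Finset.mem_range]; exact ⟨hbt, rfl⟩
  calc 2 = ({a, b} : Finset ℕ).card := (Finset.card_pair (by omega)).symm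
    _ ≤ _ := Finset.card_le_card hsub

lemma FG (p : ℕ) (hp : 2 ≤ p) (s : ℕ → ℤ) (t : ℕ) (i : ℤ) :
    G p s t i + F s t i = G p s t (i+1) + F s t (i - (p:ℤ) + 1) := by
  induction t with
  | zero => simp [F_zero, G_zero]
  | succ t ih =>
    rw [F_succ, G_succ, F_succ, G_succ]
    split_ifs <;> omega

/-- Arithmetic analysis of a legal toppling: the toppled site is in `[1,n]`
and has not toppled before. -/
lemma legal_analysis (p n : ℕ) (hp : 2 ≤ p) (hn : 1 ≤ n) (i : ℤ)
    (X0 X1 : ℕ)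
    (hD0 : X1 ≤ X0) (hD1 : X0 < X1 + p)
    (hle : i ≤ 0 → X0 = X1)
    (hgt : (n:ℤ) < i → X0 = 0 ∧ X1 = 0)
    (a b d : ℕ) (ha : a ≤ 1) (hb : b ≤ 1) (hd : d ≤ 1)
    (hain : a ≠ 0 → 1 ≤ i ∧ i ≤ (n:ℤ))
    (hbin : b ≠ 0 → 1 ≤ i + 1 ∧ i + 1 ≤ (n:ℤ))
    (hdin : d ≠ 0 → 1 ≤ i - (p:ℤ) + 1 ∧ i - (p:ℤ) + 1 ≤ (n:ℤ))
    (hleg : (X1:ℤ) + (if i + 1 = 1 then 1 else 0) + (p:ℤ)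
        ≤ (X0:ℤ) + (if i = 1 then 1 else 0) + ((p:ℤ)-1) * b + d - ((p:ℤ)-1) * a - a) :
    1 ≤ i ∧ i ≤ (n:ℤ) ∧ a = 0 := by
  have ha' : a = 0 ∨ (a = 1 ∧ 1 ≤ i ∧ i ≤ (n:ℤ)) := by
    rcases Nat.eq_zero_or_pos a with h | h
    · exact Or.inl h
    · exact Or.inr ⟨by omega, hain (by omega)⟩
  have hb' : b = 0 ∨ (b = 1 ∧ 1 ≤ i + 1 ∧ i + 1 ≤ (n:ℤ)) := by
    rcases Nat.eq_zero_or_pos b with h | h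
    · exact Or.inl h
    · exact Or.inr ⟨by omega, hbin (by omega)⟩
  have hd' : d = 0 ∨ (d = 1 ∧ 1 ≤ i - (p:ℤ) + 1 ∧ i - (p:ℤ) + 1 ≤ (n:ℤ)) := by
    rcases Nat.eq_zero_or_pos d with h | h
    · exact Or.inl h
    · exact Or.inr ⟨by omega, hdin (by omega)⟩
  have hx1 : i ≤ 0 ∧ X0 = X1 ∨ 1 ≤ i := by
    rcases le_or_gt i 0 with h | h
    · exact Or.inl ⟨h, hle h⟩
    · exact Or.inr (by omega)
  have hx2 : ((n:ℤ) < i ∧ X0 = 0 ∧ X1 = 0) ∨ i ≤ (n:ℤ) := by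
    rcases le_or_gt i (n:ℤ) with h | h
    · exact Or.inr h
    · exact Or.inl ⟨h, hgt h⟩
  rcases ha' with rfl | ⟨rfl, hi1, hi2⟩ <;>
    rcases hb' with rfl | ⟨rfl, hj1, hj2⟩ <;>
      rcases hd' with rfl | ⟨rfl, hk1, hk2⟩ <;>
        (simp only [Nat.cast_zero, Nat.cast_one, mul_zero, mul_one] at hleg;
         split_ifs at hleg <;> omega)

lemma legZ (p : ℕ) (hp : 2 ≤ p) (s : ℕ → ℤ) (c : ℕ → ℤ → ℕ) (x : ℤ → ℕ) (t : ℕ)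
    (form : ∀ i : ℤ, (c t i : ℤ) = (x i : ℤ) + (if i = 1 then 1 else 0)
        + (G p s t i : ℤ) - ((p:ℤ) - 1) * (F s t i))
    (hleg : c t (s t + 1) + p ≤ c t (s t)) :
    (x (s t + 1) : ℤ) + (if s t + 1 = 1 then 1 else 0) + (p:ℤ)
      ≤ (x (s t) : ℤ) + (if s t = 1 then 1 else 0) + ((p:ℤ)-1) * (F s t (s t + 1))
        + (F s t (s t - (p:ℤ) + 1)) - ((p:ℤ)-1) * (F s t (s t)) - (F s t (s t)) := by
  have e1 := form (s t)
  have e2 := form (s t + 1)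
  have efg : (G p s t (s t) : ℤ) + (F s t (s t) : ℤ)
      = (G p s t (s t + 1) : ℤ) + (F s t (s t - (p:ℤ) + 1) : ℤ) := by
    exact_mod_cast FG p hp s t (s t)
  have hl : (c t (s t + 1) : ℤ) + p ≤ c t (s t) := by exact_mod_cast hleg
  linarith

end KSPM




/-- One-dimensional KSPM(p) toppling at site `i`: site `i` loses `p-1` grains and
each site `j` with `i+1 ≤ j ≤ i+p-1` receives one grain. -/
def topple (p : ℕ) (i : ℤ) (x : ℤ → ℕ) : ℤ → ℕ :=
  fun j => if j = i then x i - (p - 1)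
    else if i + 1 ≤ j ∧ j ≤ i + (p : ℤ) - 1 then x j + 1 else x j

/-- In KSPM(p) with p ≥ 2, starting from a stable monotone configuration
`x ∈ SM(n)` to which one grain has been added at column 1, every avalanche
terminates after at most `n` topplings (any sequence of legal topplings has
length at most `n`), and when the sequence is maximal (no further toppling is
applicable) the final configuration is stable and monotone on the sites `i ≥ 1`. -/
theorem kspm_avalanche_terminates_and_final_stable (p n : ℕ) (hp : 2 ≤ p) (hn : 1 ≤ n)
    (x : ℤ → ℕ)
    (hmono : ∀ i : ℤ, x (i + 1) ≤ x i)
    (hstab : ∀ i : ℤ, x i < x (i + 1) + p)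
    (hleft : ∀ i : ℤ, i ≤ 1 → x i = x 1)
    (hright : ∀ i : ℤ, (n : ℤ) < i → x i = 0)
    (m : ℕ) (s : ℕ → ℤ) (c : ℕ → ℤ → ℕ)
    (hc0 : c 0 = fun j => if j = 1 then x 1 + 1 else x j)
    (hlegal : ∀ t : ℕ, t < m → c t (s t + 1) + p ≤ c t (s t))
    (hstep : ∀ t : ℕ, t < m → c (t + 1) = topple p (s t) (c t)) :
    m ≤ n ∧
      ((∀ i : ℤ, ¬ (c m (i + 1) + p ≤ c m i)) →
        ∀ i : ℤ, 1 ≤ i → c m (i + 1) ≤ c m i ∧ c m i < c m (i + 1) + p) := by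
  have key : ∀ t, t ≤ m →
      (∀ j, KSPM.F s t j ≤ 1) ∧
      (∀ j, KSPM.F s t j ≠ 0 → 1 ≤ j ∧ j ≤ (n:ℤ)) ∧
      (∀ i : ℤ, (c t i : ℤ) = (x i : ℤ) + (if i = 1 then 1 else 0)
          + (KSPM.G p s t i : ℤ) - ((p:ℤ) - 1) * (KSPM.F s t i)) := by
    intro t
    induction t with
    | zero =>
      intro _
      refine ⟨fun j => by simp [KSPM.F_zero], fun j h => absurd (KSPM.F_zero s j) h,
        fun i => ?_⟩
      rw [hc0]
      simp only [KSPM.F_zero, KSPM.G_zero, Nat.cast_zero, mul_zero, add_zero, sub_zero]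
      split_ifs with h
      · subst h; push_cast; ring
      · ring
    | succ t ih =>
      intro ht
      have htm : t < m := ht
      obtain ⟨h1, h2, h3⟩ := ih (Nat.le_of_lt htm)
      have hleg := hlegal t htm
      have hlegZ := KSPM.legZ p hp s c x t h3 hleg
      obtain ⟨hi1, hi2, ha0⟩ :=
        KSPM.legal_analysis p n hp hn (s t) (x (s t)) (x (s t + 1))
          (hmono (s t)) (hstab (s t))
          (fun h => by rw [hleft (s t) (by omega), hleft (s t + 1) (by omega)])
          (fun h => ⟨hright (s t) (by omega), hright (s t + 1) (by omega)⟩)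
          (KSPM.F s t (s t)) (KSPM.F s t (s t + 1)) (KSPM.F s t (s t - (p:ℤ) + 1))
          (h1 _) (h1 _) (h1 _) (h2 _) (h2 _) (h2 _) hlegZ
      refine ⟨?_, ?_, ?_⟩
      · intro j
        rw [KSPM.F_succ]
        split_ifs with h
        · rw [← h]; omega
        · have := h1 j; omega
      · intro j hj
        rw [KSPM.F_succ] at hj
        split_ifs at hj with h
        · rw [← h]; exact ⟨hi1, hi2⟩
        · exact h2 j (by omega)
      · intro i
        rw [hstep t htm]
        unfold topple
        rw [KSPM.F_succ, KSPM.G_succ]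
        by_cases hji : i = s t
        · subst hji
          have hcp : p - 1 ≤ c t (s t) := by omega
          have hGif : (if s t - (p:ℤ) + 1 ≤ s t ∧ s t ≤ s t - 1 then (1:ℕ) else 0) = 0 :=
            if_neg (by omega)
          have hFif : (if s t = s t then (1:ℕ) else 0) = 1 := if_pos rfl
          rw [if_pos rfl, hGif, hFif, ha0, Nat.cast_sub hcp,
            Nat.cast_sub (by omega : 1 ≤ p)]
          have := h3 (s t)
          rw [ha0] at this
          push_cast at this ⊢
          linarith
        · rw [if_neg hji]
          have hFif : (if s t = i then (1:ℕ) else 0) = 0 :=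
            if_neg (fun h => hji h.symm)
          by_cases hin : s t + 1 ≤ i ∧ i ≤ s t + (p:ℤ) - 1
          · have hGif : (if i - (p:ℤ) + 1 ≤ s t ∧ s t ≤ i - 1 then (1:ℕ) else 0) = 1 :=
              if_pos (by omega)
            rw [if_pos hin, hFif, hGif]
            have := h3 i
            push_cast
            push_cast at this
            linarith
          · have hGif : (if i - (p:ℤ) + 1 ≤ s t ∧ s t ≤ i - 1 then (1:ℕ) else 0) = 0 :=
              if_neg (by omega)
            rw [if_neg hin, hFif, hGif]
            have := h3 i
            push_cast
            push_cast at this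
            linarith
  have hmn : m ≤ n := by
    have hcard : (Finset.range m).card ≤ (Finset.Icc (1:ℤ) (n:ℤ)).card := by
      apply Finset.card_le_card_of_injOn s
      · intro a haa
        rw [Finset.mem_coe, Finset.mem_range] at haa
        have hne : KSPM.F s m (s a) ≠ 0 := by
          have h1 : KSPM.F s (a+1) (s a) = KSPM.F s a (s a) + 1 := by
            rw [KSPM.F_succ, if_pos rfl]
          have h2 := KSPM.F_mono s (show a + 1 ≤ m by omega) (s a)
          omega
        have := (key m le_rfl).2.1 (s a) hne
        rw [Finset.mem_coe, Finset.mem_Icc]; exact this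
      · intro a haa b hbb hab
        rw [Finset.mem_coe, Finset.mem_range] at haa hbb
        by_contra hne
        rcases Nat.lt_or_ge a b with h | h
        · have h2 := KSPM.two_le_F h hbb hab
          have := (key m le_rfl).1 (s b)
          omega
        · have hba : b < a := by omega
          have h2 := KSPM.two_le_F hba haa hab.symm
          have := (key m le_rfl).1 (s a)
          omega
    rw [Finset.card_range, Int.card_Icc] at hcard
    omega
  refine ⟨hmn, fun hmax i hi => ?_⟩
  obtain ⟨h1m, h2m, h3m⟩ := key m le_rfl
  have hstable : c m i < c m (i + 1) + p := by
    have := hmax i; omega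
  refine ⟨?_, hstable⟩
  have hgoal : (c m (i+1) : ℤ) ≤ (c m i : ℤ) := by
    have e1 := h3m i
    have e2 := h3m (i+1)
    have efg : (KSPM.G p s m i : ℤ) + (KSPM.F s m i : ℤ)
        = (KSPM.G p s m (i+1) : ℤ) + (KSPM.F s m (i - (p:ℤ) + 1) : ℤ) := by
      exact_mod_cast KSPM.FG p hp s m i
    have hi1 : ¬ (i + 1 = 1) := by omega
    have hbm : KSPM.F s m (i+1) ≤ 1 := h1m _
    have hdm : KSPM.F s m (i - (p:ℤ) + 1) ≤ 1 := h1m _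
    by_cases hFi : KSPM.F s m i = 0
    · -- never toppled: monotone from nonnegativity
      have hxm : x (i+1) ≤ x i := hmono i
      rw [e1, e2, if_neg hi1, hFi]
      have hb' : KSPM.F s m (i+1) = 0 ∨ KSPM.F s m (i+1) = 1 := by omega
      rcases hb' with hb | hb <;>
        rw [hb] <;>
          simp only [Nat.cast_zero, Nat.cast_one, mul_zero, mul_one] <;>
            split_ifs <;> omega
    · -- toppled once; use legality at the time it toppled
      have hFi1 : KSPM.F s m i = 1 := by have := h1m i; omega
      obtain ⟨t, htm, hst⟩ := KSPM.F_exists hFi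
      obtain ⟨h1t, h2t, h3t⟩ := key t (Nat.le_of_lt htm)
      have hFt0 : KSPM.F s t i = 0 := by
        have h4 := (key (t+1) htm).1 i
        rw [KSPM.F_succ, if_pos hst] at h4
        omega
      have hlegZ := KSPM.legZ p hp s c x t h3t (hlegal t htm)
      rw [hst] at hlegZ
      rw [hFt0] at hlegZ
      have hbt : KSPM.F s t (i+1) ≤ KSPM.F s m (i+1) := KSPM.F_mono s (Nat.le_of_lt htm) _
      have hdt : KSPM.F s t (i - (p:ℤ) + 1) ≤ KSPM.F s m (i - (p:ℤ) + 1) :=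
        KSPM.F_mono s (Nat.le_of_lt htm) _
      rw [e1, e2, if_neg hi1, hFi1]
      have hbt1 : KSPM.F s t (i+1) ≤ 1 := h1t _
      have hb' : KSPM.F s t (i+1) = 0 ∨ KSPM.F s t (i+1) = 1 := by omega
      have hbm' : KSPM.F s m (i+1) = 0 ∨ KSPM.F s m (i+1) = 1 := by omega
      rcases hb' with hb | hb <;> rcases hbm' with hc | hc <;>
        rw [hb] at hlegZ hbt <;> rw [hc] at hbt ⊢ <;>
          simp only [Nat.cast_zero, Nat.cast_one, mul_zero, mul_one] at hlegZ ⊢ <;>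
            split_ifs at hlegZ ⊢ <;> omega
  exact_mod_cast hgoal
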